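/- There is no polynomial R ∈ ℂ[x, y, y'] satisfying X₀(R) = y, where X₀ = ∂/∂x + y' ∂/∂y + 6y² ∂/∂y'. -/

import Mathlib

open MvPolynomial

noncomputable section

abbrev P3 : Type := MvPolynomial (Fin 3) ℂ

/-- The derivation `X₀ = ∂/∂x + y' ∂/∂y + 6y² ∂/∂y'` on `ℂ[x, y, y']`. -/
def X0 (f : P3) : P3 :=
  pderiv 0 f + X 2 * pderiv 1 f + 6 * (X 1) ^ 2 * pderiv 2 f

def E (a b c : ℕ) : Fin 3 →₀ ℕ :=
  Finsupp.single 0 a + Finsupp.single 1 b + Finsupp.single 2 c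

lemma E_apply0 (a b c : ℕ) : E a b c 0 = a := by simp [E, Finsupp.single_apply]
lemma E_apply1 (a b c : ℕ) : E a b c 1 = b := by simp [E, Finsupp.single_apply]
lemma E_apply2 (a b c : ℕ) : E a b c 2 = c := by simp [E, Finsupp.single_apply]

lemma E_ext {a b c a' b' c' : ℕ} (h : E a b c = E a' b' c') : a = a' ∧ b = b' ∧ c = c' := by
  refine ⟨?_, ?_, ?_⟩
  · have := DFunLike.congr_fun h 0; simpa [E_apply0] using this
  · have := DFunLike.congr_fun h 1; simpa [E_apply1] using this
  · have := DFunLike.congr_fun h 2; simpa [E_apply2] using this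

lemma E_add0 (a b c : ℕ) : E a b c + Finsupp.single 0 1 = E (a+1) b c := by
  ext j; fin_cases j <;>
    simp [E, Finsupp.add_apply, Finsupp.single_apply]

lemma E_add1 (a b c : ℕ) : E a b c + Finsupp.single 1 1 = E a (b+1) c := by
  ext j; fin_cases j <;>
    simp [E, Finsupp.add_apply, Finsupp.single_apply]

lemma E_add2 (a b c : ℕ) : E a b c + Finsupp.single 2 1 = E a b (c+1) := by
  ext j; fin_cases j <;>
    simp [E, Finsupp.add_apply, Finsupp.single_apply]

lemma E_sub2 (a b c : ℕ) : E a b (c+1) - Finsupp.single 2 1 = E a b c := by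
  rw [← E_add2]; simp

lemma E_sub1 (a b c : ℕ) : E a (b+2) c - Finsupp.single 1 2 = E a b c := by
  have : E a b c + Finsupp.single 1 2 = E a (b+2) c := by
    ext j; fin_cases j <;> simp [E, Finsupp.add_apply, Finsupp.single_apply]
  rw [← this]; simp

lemma six_X1_sq : (6 : P3) * (X 1) ^ 2 = monomial (Finsupp.single 1 2) 6 := by
  rw [X_pow_eq_monomial]
  have h6 : (6 : P3) = C 6 := (map_ofNat C 6).symm
  rw [h6, C_mul_monomial, mul_one]

lemma coeff_pderiv {σ : Type*} [DecidableEq σ] (i : σ) (m : σ →₀ ℕ) (f : MvPolynomial σ ℂ) :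
    coeff m (pderiv i f) = (m i + 1) * coeff (m + Finsupp.single i 1) f := by
  induction f using MvPolynomial.induction_on' with
  | monomial s a =>
    rw [pderiv_monomial, coeff_monomial, coeff_monomial]
    by_cases h : s = m + Finsupp.single i 1
    · subst h
      rw [if_pos rfl, if_pos]
      · simp [Finsupp.add_apply]; ring
      · ext j
        by_cases hj : j = i <;> simp [hj, Finsupp.single_apply]
    · rw [if_neg h, mul_zero]
      by_cases h2 : s - Finsupp.single i 1 = m
      · rw [if_pos h2]
        by_cases hsi : s i = 0
        · simp [hsi]
        · exfalso
          apply h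
          rw [← h2]
          ext j
          by_cases hj : j = i
          · subst hj; simp [Finsupp.single_apply]; omega
          · simp [Finsupp.single_apply, Ne.symm hj]
      · rw [if_neg h2]
  | add p q hp hq => simp [hp, hq]; ring

lemma coeff_X0 (R : P3) (a b c : ℕ) :
    coeff (E a b c) (X0 R) =
      ((a : ℂ)+1) * coeff (E (a+1) b c) R
      + (if c = 0 then 0 else ((b : ℂ)+1) * coeff (E a (b+1) (c-1)) R)
      + (if 2 ≤ b then 6 * ((c : ℂ)+1) * coeff (E a (b-2) (c+1)) R else 0) := by
  rw [X0, coeff_add, coeff_add]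
  congr 1
  congr 1
  · rw [_root_.coeff_pderiv, E_apply0, E_add0]
  · rw [coeff_X_mul']
    by_cases hc : c = 0
    · subst hc
      rw [if_neg, if_pos rfl]
      simp [Finsupp.mem_support_iff, E_apply2]
    · obtain ⟨c', rfl⟩ : ∃ c', c = c' + 1 := ⟨c - 1, (Nat.succ_pred_eq_of_pos (Nat.pos_of_ne_zero hc)).symm⟩
      rw [if_pos, if_neg hc, E_sub2, _root_.coeff_pderiv, E_apply1, E_add1]
      · simp
      · simp [Finsupp.mem_support_iff, E_apply2]
  · rw [six_X1_sq, coeff_monomial_mul']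
    by_cases hb : 2 ≤ b
    · obtain ⟨b', rfl⟩ : ∃ b', b = b' + 2 := ⟨b - 2, by omega⟩
      rw [if_pos, if_pos hb, E_sub1, _root_.coeff_pderiv, E_apply2, E_add2]
      · simp; ring
      · rw [Finsupp.single_le_iff, E_apply1]; omega
    · rw [if_neg, if_neg hb]
      rw [Finsupp.single_le_iff, E_apply1]; omega

lemma coeff_X1 (a b c : ℕ) :
    coeff (E a b c) (X 1 : P3) = if a = 0 ∧ b = 1 ∧ c = 0 then 1 else 0 := by
  rw [coeff_X']
  by_cases h : a = 0 ∧ b = 1 ∧ c = 0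
  · obtain ⟨rfl, rfl, rfl⟩ := h
    rw [if_pos, if_pos ⟨rfl, rfl, rfl⟩]
    ext j; fin_cases j <;> simp [E, Finsupp.single_apply]
  · rw [if_neg, if_neg h]
    intro hcontra
    apply h
    have : E 0 1 0 = E a b c := by
      rw [← hcontra]; ext j; fin_cases j <;> simp [E, Finsupp.single_apply]
    obtain ⟨h1, h2, h3⟩ := E_ext this
    exact ⟨h1.symm, h2.symm, h3.symm⟩

def qq (R : P3) (b c : ℕ) : ℂ := coeff (E (2*b+3*c-1) b c) R

lemma rec_qq (R : P3) (hR : X0 R = X 1) (b c : ℕ) (hbc : b + c ≠ 0) :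
    ((2*b+3*c-1 : ℕ) : ℂ) * qq R b c
      + (if c = 0 then 0 else ((b:ℂ)+1) * qq R (b+1) (c-1))
      + (if 2 ≤ b then 6*((c:ℂ)+1)* qq R (b-2) (c+1) else 0)
      = if b = 1 ∧ c = 0 then 1 else 0 := by
  obtain ⟨k, hk⟩ : ∃ k, 2*b+3*c = k+2 := ⟨2*b+3*c-2, by omega⟩
  have h := congrArg (coeff (E k b c)) hR
  rw [coeff_X0, coeff_X1] at h
  have e0 : qq R b c = coeff (E (k+1) b c) R := by
    rw [qq, show 2*b+3*c-1 = k+1 from by omega]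
  have e1 : (if c = 0 then (0:ℂ) else ((b:ℂ)+1) * qq R (b+1) (c-1))
      = (if c = 0 then 0 else ((b:ℂ)+1) * coeff (E k (b+1) (c-1)) R) := by
    by_cases hc : c = 0
    · simp [hc]
    · rw [if_neg hc, if_neg hc, qq, show 2*(b+1)+3*(c-1)-1 = k from by omega]
  have e2 : (if 2 ≤ b then 6*((c:ℂ)+1)* qq R (b-2) (c+1) else 0)
      = (if 2 ≤ b then 6*((c:ℂ)+1)* coeff (E k (b-2) (c+1)) R else 0) := by
    by_cases hb : 2 ≤ b
    · rw [if_pos hb, if_pos hb, qq, show 2*(b-2)+3*(c+1)-1 = k from by omega]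
    · rw [if_neg hb, if_neg hb]
  have e3 : ((2*b+3*c-1 : ℕ):ℂ) = (k:ℂ)+1 := by
    rw [show 2*b+3*c-1 = k+1 from by omega]; push_cast; ring
  have e4 : (if k = 0 ∧ b = 1 ∧ c = 0 then (1:ℂ) else 0) = if b = 1 ∧ c = 0 then 1 else 0 := by
    by_cases hb : b = 1 ∧ c = 0
    · have hk0 : k = 0 := by omega
      rw [if_pos ⟨hk0, hb.1, hb.2⟩, if_pos hb]
    · rw [if_neg (by tauto), if_neg hb]
  rw [e0, e1, e2, e3, ← e4]
  exact h

lemma key (R : P3) (hR : X0 R = X 1) :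
    ∀ n, ∀ b c : ℕ, 2*b+3*c = n → b + c ≠ 0 →
      ∃ r : ℝ, 0 < r ∧ qq R b c = (-1:ℂ)^c * (r:ℝ) := by
  intro n
  induction n using Nat.strong_induction_on with
  | _ n IH =>
    intro b c hn hbc
    have h2 : ∃ r2 : ℝ, 0 ≤ r2 ∧ (c ≠ 0 → 0 < r2) ∧
        (if c = 0 then (0:ℂ) else ((b:ℂ)+1) * qq R (b+1) (c-1)) = -((-1:ℂ)^c * (r2:ℝ)) := by
      by_cases hc : c = 0
      · exact ⟨0, le_refl 0, fun h => absurd hc h, by simp [hc]⟩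
      · obtain ⟨c', rfl⟩ : ∃ c', c = c' + 1 := ⟨c - 1, by omega⟩
        obtain ⟨r2, hr2, hq2⟩ := IH (2*(b+1)+3*c') (by omega) (b+1) c' rfl (by omega)
        refine ⟨(b+1)*r2, by positivity, fun _ => by positivity, ?_⟩
        rw [if_neg hc]
        simp only [Nat.add_sub_cancel, hq2]
        push_cast
        ring
    have h3 : ∃ r3 : ℝ, 0 ≤ r3 ∧ (2 ≤ b → 0 < r3) ∧
        (if 2 ≤ b then 6*((c:ℂ)+1)* qq R (b-2) (c+1) else 0) = -((-1:ℂ)^c * (r3:ℝ)) := by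
      by_cases hb : 2 ≤ b
      · obtain ⟨b', rfl⟩ : ∃ b', b = b' + 2 := ⟨b - 2, by omega⟩
        obtain ⟨r3, hr3, hq3⟩ := IH (2*b'+3*(c+1)) (by omega) b' (c+1) rfl (by omega)
        refine ⟨6*(c+1)*r3, by positivity, fun _ => by positivity, ?_⟩
        rw [if_pos hb, Nat.add_sub_cancel, hq3]
        push_cast
        ring
      · exact ⟨0, le_refl 0, fun h => absurd h hb, by simp [hb]⟩
    obtain ⟨r2, hr2n, hr2p, hq2⟩ := h2
    obtain ⟨r3, hr3n, hr3p, hq3⟩ := h3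
    set d : ℝ := if b = 1 ∧ c = 0 then 1 else 0 with hd
    have hdelta : (if b = 1 ∧ c = 0 then (1:ℂ) else 0) = (-1:ℂ)^c * (d:ℝ) := by
      by_cases hb : b = 1 ∧ c = 0
      · rw [if_pos hb, hd, if_pos hb, hb.2]; norm_num
      · rw [if_neg hb, hd, if_neg hb]; norm_num
    have hrec := rec_qq R hR b c hbc
    rw [hq2, hq3, hdelta] at hrec
    have hpos : 0 < d + r2 + r3 := by
      by_cases hc : c = 0
      · by_cases hb : b = 1 ∧ c = 0
        · have : d = 1 := by rw [hd, if_pos hb]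
          linarith
        · have hb2 : 2 ≤ b := by omega
          have := hr3p hb2
          have : 0 ≤ d := by rw [hd]; positivity
          linarith [hr3p hb2]
      · have : 0 ≤ d := by rw [hd]; positivity
        linarith [hr2p hc]
    refine ⟨(d + r2 + r3) / ((2*b+3*c-1 : ℕ) : ℝ), ?_, ?_⟩
    · apply div_pos hpos
      have h1 : 0 < 2*b+3*c-1 := by omega
      exact_mod_cast h1
    · have h1 : 2*b+3*c-1 ≠ 0 := by omega
      have hne : ((2*b+3*c-1 : ℕ) : ℂ) ≠ 0 := Nat.cast_ne_zero.mpr h1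
      push_cast
      field_simp
      linear_combination hrec


/-- There is no polynomial `R ∈ ℂ[x, y, y']` with `X₀(R) = y`. -/
theorem stmt6 : ¬ ∃ R : P3, X0 R = X 1 := by
  rintro ⟨R, hR⟩
  set B := R.support.sup (fun m => m 1) + 1 with hB
  obtain ⟨r, hr, hqB⟩ := key R hR (2*B) B 0 (by ring) (by omega)
  have hne : qq R B 0 ≠ 0 := by
    rw [hqB]
    simp only [pow_zero, one_mul]
    exact_mod_cast hr.ne'
  have hmem : E (2*B+3*0-1) B 0 ∈ R.support := MvPolynomial.mem_support_iff.mpr hne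
  have hle : (E (2*B+3*0-1) B 0) 1 ≤ R.support.sup (fun m => m 1) :=
    Finset.le_sup (f := fun m => m 1) hmem
  simp only [E_apply1] at hle
  omega
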